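/- The function g : ℝ → ℝ defined by g(z) = (coth z − sgn z)(z + (1/2)sinh(2z)) sech²(z) for z ≠ 0 and g(0) = 2 is continuous and Lebesgue integrable on ℝ, and ∫_ℝ g(z) dz = π²/4. -/

import Mathlib

open MeasureTheory Filter Set Topology

namespace OstrovskyAux

noncomputable def T : ℝ → ℝ := fun z => Real.sinh z / Real.cosh z

lemma hasDerivAt_T (z : ℝ) : HasDerivAt T (1 / Real.cosh z ^ 2) z := by
  have h := (Real.hasDerivAt_sinh z).div (Real.hasDerivAt_cosh z) (Real.cosh_pos z).ne'
  have key : Real.cosh z * Real.cosh z - Real.sinh z * Real.sinh z = 1 := by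
    nlinarith [Real.cosh_sq_sub_sinh_sq z]
  rw [key] at h
  exact h

lemma T_pos {z : ℝ} (hz : 0 < z) : 0 < T z :=
  div_pos (by rwa [Real.sinh_pos_iff]) (Real.cosh_pos z)

lemma T_lt_one (z : ℝ) : T z < 1 :=
  (div_lt_one (Real.cosh_pos z)).mpr (Real.sinh_lt_cosh z)

lemma T_nonneg {z : ℝ} (hz : 0 ≤ z) : 0 ≤ T z :=
  div_nonneg (by rwa [Real.sinh_nonneg_iff]) (Real.cosh_pos z).le

lemma tendsto_T : Tendsto T atTop (𝓝 1) := by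
  have hfun : T = fun z => (1 - Real.exp (-z) * Real.exp (-z)) /
      (1 + Real.exp (-z) * Real.exp (-z)) := by
    funext z
    have h1 : Real.exp z ≠ 0 := (Real.exp_pos z).ne'
    have h2 : (0:ℝ) < Real.exp z * Real.exp z + 1 := by positivity
    unfold T
    rw [Real.sinh_eq, Real.cosh_eq, Real.exp_neg]
    field_simp
    all_goals ring
  rw [hfun]
  have hq : Tendsto (fun z : ℝ => Real.exp (-z) * Real.exp (-z)) atTop (𝓝 0) := by
    have h := Real.tendsto_exp_atBot.comp tendsto_neg_atTop_atBot
    simpa using h.mul h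
  have hnum : Tendsto (fun z : ℝ => 1 - Real.exp (-z) * Real.exp (-z)) atTop (𝓝 1) := by
    simpa using tendsto_const_nhds.sub hq
  have hden : Tendsto (fun z : ℝ => 1 + Real.exp (-z) * Real.exp (-z)) atTop (𝓝 1) := by
    simpa using tendsto_const_nhds.add hq
  have := hnum.div hden one_ne_zero
  rw [div_one] at this
  exact this

lemma hasDerivAt_anti (m : ℕ) (x : ℝ) :
    HasDerivAt (fun z => T z ^ (m + 1) / (m + 1))
      (T x ^ m * (1 / Real.cosh x ^ 2)) x := by
  have h := ((hasDerivAt_T x).pow (m + 1)).div_const ((m : ℝ) + 1)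
  have hm : ((m : ℝ) + 1) ≠ 0 := by positivity
  refine h.congr_deriv ?_
  simp only [Nat.add_sub_cancel]
  push_cast
  field_simp

lemma tendsto_anti (m : ℕ) :
    Tendsto (fun z => T z ^ (m + 1) / (m + 1)) atTop (𝓝 (1 / ((m:ℝ) + 1))) := by
  have := (tendsto_T.pow (m + 1)).div_const ((m : ℝ) + 1)
  simpa using this

lemma anti_nonneg (m : ℕ) : ∀ x ∈ Ioi (0:ℝ), 0 ≤ T x ^ m * (1 / Real.cosh x ^ 2) :=
  fun x hx => mul_nonneg (pow_nonneg (T_nonneg (le_of_lt hx)) m) (by positivity)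

lemma integrableOn_T_pow (m : ℕ) :
    IntegrableOn (fun z => T z ^ m * (1 / Real.cosh z ^ 2)) (Ioi (0:ℝ)) :=
  integrableOn_Ioi_deriv_of_nonneg' (fun x _ => hasDerivAt_anti m x)
    (anti_nonneg m) (tendsto_anti m)

lemma integral_T_pow (m : ℕ) :
    ∫ z in Ioi (0:ℝ), T z ^ m * (1 / Real.cosh z ^ 2) = 1 / ((m:ℝ) + 1) := by
  have h := integral_Ioi_of_hasDerivAt_of_nonneg' (fun x _ => hasDerivAt_anti m x)
    (anti_nonneg m) (tendsto_anti m)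
  rw [h]
  simp [T, Real.sinh_zero, Real.cosh_zero, zero_pow (Nat.succ_ne_zero m)]

/-- The summand in the series expansion. -/
noncomputable def v (k : ℕ) (z : ℝ) : ℝ :=
  (2 * (k : ℝ) + 2) / (2 * k + 1) *
    (T z ^ (2 * k) * (1 - T z) * (1 / Real.cosh z ^ 2))

lemma hasSum_v {z : ℝ} (hz : 0 < z) :
    HasSum (fun k => v k z)
      ((1 - T z) + z / Real.sinh z * ((Real.cosh z - Real.sinh z) / Real.cosh z ^ 2)) := by
  have hcosh : Real.cosh z ≠ 0 := (Real.cosh_pos z).ne'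
  have hsinh : (0:ℝ) < Real.sinh z := Real.sinh_pos_iff.mpr hz
  have ht0 : 0 < T z := T_pos hz
  have ht1 : T z < 1 := T_lt_one z
  have habs : |T z| < 1 := abs_lt.mpr ⟨by linarith, ht1⟩
  -- geometric part
  have h1 : HasSum (fun k : ℕ => (T z ^ 2) ^ k * ((1 - T z) * (1 / Real.cosh z ^ 2)))
      ((1 - T z ^ 2)⁻¹ * ((1 - T z) * (1 / Real.cosh z ^ 2))) :=
    (hasSum_geometric_of_lt_one (by positivity) (by nlinarith)).mul_right _
  -- log part
  have hlog : Real.log (1 + T z) - Real.log (1 - T z) = 2 * z := by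
    have e1 : 1 + T z = Real.exp z / Real.cosh z := by
      rw [eq_div_iff hcosh]
      have := Real.cosh_add_sinh z
      unfold T
      field_simp
      all_goals linarith
    have e2 : 1 - T z = Real.exp (-z) / Real.cosh z := by
      rw [eq_div_iff hcosh]
      have := Real.cosh_sub_sinh z
      unfold T
      field_simp
      all_goals linarith
    rw [e1, e2, Real.log_div (Real.exp_ne_zero z) hcosh,
      Real.log_div (Real.exp_ne_zero (-z)) hcosh, Real.log_exp, Real.log_exp]
    ring
  have h2base := Real.hasSum_log_sub_log_of_abs_lt_one habs
  rw [hlog] at h2base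
  have h2 : HasSum
      (fun k : ℕ => (2 : ℝ) * (1 / (2 * k + 1)) * T z ^ (2 * k + 1) *
        ((1 - T z) * (1 / Real.cosh z ^ 2) / (2 * T z)))
      (2 * z * ((1 - T z) * (1 / Real.cosh z ^ 2) / (2 * T z))) :=
    h2base.mul_right _
  have h3 := h1.add h2
  have hterm : (fun k => v k z) = fun k : ℕ =>
      (T z ^ 2) ^ k * ((1 - T z) * (1 / Real.cosh z ^ 2)) +
      (2 : ℝ) * (1 / (2 * k + 1)) * T z ^ (2 * k + 1) *
        ((1 - T z) * (1 / Real.cosh z ^ 2) / (2 * T z)) := by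
    funext k
    have hk : (2 * (k : ℝ) + 1) ≠ 0 := by positivity
    have hp : T z ^ (2 * k + 1) = (T z ^ 2) ^ k * T z := by
      rw [pow_succ, pow_mul]
    have hp2 : T z ^ (2 * k) = (T z ^ 2) ^ k := by rw [pow_mul]
    unfold v
    rw [hp, hp2]
    field_simp
    ring
  have hval : (1 - T z ^ 2)⁻¹ * ((1 - T z) * (1 / Real.cosh z ^ 2)) +
      2 * z * ((1 - T z) * (1 / Real.cosh z ^ 2) / (2 * T z)) =
      (1 - T z) + z / Real.sinh z * ((Real.cosh z - Real.sinh z) / Real.cosh z ^ 2) := by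
    have hsq : 1 - T z ^ 2 = 1 / Real.cosh z ^ 2 := by
      unfold T
      field_simp
      all_goals nlinarith [Real.cosh_sq_sub_sinh_sq z]
    rw [hsq]
    unfold T
    field_simp
    all_goals ring
  rw [hterm, ← hval]
  exact h3

lemma hasSum_odd_sq : HasSum (fun k : ℕ => 1 / (2 * (k : ℝ) + 1) ^ 2)
    (Real.pi ^ 2 / 8) := by
  set f : ℕ → ℝ := fun n => (1 : ℝ) / (n : ℝ) ^ 2 with hf
  have hz : HasSum f (Real.pi ^ 2 / 6) := hasSum_zeta_two
  have heven : HasSum (fun k : ℕ => f (2 * k)) (Real.pi ^ 2 / 24) := by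
    have h := hz.mul_left (1 / 4)
    have hfun : (fun k : ℕ => f (2 * k)) = fun k : ℕ => 1 / 4 * f k := by
      funext k
      simp only [hf]
      push_cast
      ring
    rw [hfun]
    rw [show Real.pi ^ 2 / 24 = 1 / 4 * (Real.pi ^ 2 / 6) by ring]
    exact h
  have hinj : Function.Injective (fun k : ℕ => 2 * k + 1) := by
    intro a b h
    have h' : 2 * a + 1 = 2 * b + 1 := h
    omega
  have hodd_summable : Summable (fun k : ℕ => f (2 * k + 1)) :=
    hz.summable.comp_injective hinj
  obtain ⟨S, hS⟩ := hodd_summable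
  have htot := heven.even_add_odd hS
  have hEq : Real.pi ^ 2 / 24 + S = Real.pi ^ 2 / 6 := htot.unique hz
  have hSval : S = Real.pi ^ 2 / 8 := by linarith
  rw [hSval] at hS
  have hfe : (fun k : ℕ => 1 / (2 * (k : ℝ) + 1) ^ 2) = fun k : ℕ => f (2 * k + 1) := by
    funext k
    simp only [hf]
    push_cast
    ring
  rw [hfe]
  exact hS

end OstrovskyAux

open OstrovskyAux

lemma ostrovsky_phi_continuous :
    Continuous (fun z : ℝ => if z = 0 then 1 else z / Real.sinh z) := by
  set φ : ℝ → ℝ := fun z => if z = 0 then 1 else z / Real.sinh z with hφ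
  rw [continuous_iff_continuousAt]
  intro x
  rcases eq_or_ne x 0 with rfl | hx
  · have h1 : Tendsto (fun z : ℝ => Real.sinh z / z) (nhdsWithin 0 {(0:ℝ)}ᶜ) (𝓝 1) := by
      have h := Real.hasDerivAt_sinh 0
      rw [hasDerivAt_iff_tendsto_slope] at h
      have : (slope Real.sinh 0) = fun z => Real.sinh z / z := by
        funext z
        simp [slope_def_field, Real.sinh_zero]
      rw [this] at h
      simpa [Real.cosh_zero] using h
    have h2 : Tendsto (fun z : ℝ => z / Real.sinh z) (nhdsWithin 0 {(0:ℝ)}ᶜ) (𝓝 1) := by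
      have := h1.inv₀ one_ne_zero
      simpa [inv_div] using this
    have h3 : Tendsto φ (nhdsWithin 0 {(0:ℝ)}ᶜ) (𝓝 1) := by
      apply h2.congr'
      filter_upwards [self_mem_nhdsWithin] with z hz
      simp only [hφ, if_neg (show z ≠ 0 from hz)]
    have h4 : Tendsto φ (pure (0:ℝ)) (𝓝 1) := by
      have := tendsto_pure_nhds φ 0
      simpa [hφ] using this
    have : Tendsto φ (nhdsWithin 0 {(0:ℝ)}ᶜ ⊔ pure 0) (𝓝 1) := tendsto_sup.mpr ⟨h3, h4⟩
    rw [nhdsNE_sup_pure] at this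
    simpa [ContinuousAt, hφ] using this
  · have hs : Real.sinh x ≠ 0 := Real.sinh_ne_zero.mpr hx
    have hc : ContinuousAt (fun z : ℝ => z / Real.sinh z) x :=
      continuousAt_id.div Real.continuous_sinh.continuousAt hs
    apply hc.congr
    filter_upwards [eventually_ne_nhds hx] with z hz
    simp only [hφ, if_neg hz]

open OstrovskyAux in
/-- The function `g(z) = (coth z − sgn z)(z + (1/2)sinh(2z)) sech²(z)` for
`z ≠ 0`, with `g(0) = 2`, is continuous and Lebesgue integrable on `ℝ`, and
`∫_ℝ g = π²/4`. -/
theorem ostrovsky_velocity_integral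
    (g : ℝ → ℝ)
    (hg : ∀ z : ℝ, z ≠ 0 →
      g z = (Real.cosh z / Real.sinh z - Real.sign z) * (z + Real.sinh (2 * z) / 2)
        / Real.cosh z ^ 2)
    (hg0 : g 0 = 2) :
    Continuous g ∧ Integrable g volume ∧ ∫ z : ℝ, g z = Real.pi ^ 2 / 4 := by
  have hcosh : ∀ z : ℝ, Real.cosh z ≠ 0 := fun z => (Real.cosh_pos z).ne'
  -- evenness
  have heven : ∀ z : ℝ, g (-z) = g z := by
    intro z
    rcases eq_or_ne z 0 with rfl | hz
    · rw [neg_zero]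
    · have hs : Real.sinh z ≠ 0 := Real.sinh_ne_zero.mpr hz
      rw [hg _ (neg_ne_zero.mpr hz), hg _ hz, Real.cosh_neg, Real.sinh_neg, Real.sign_neg,
        show (2:ℝ) * -z = -(2*z) by ring, Real.sinh_neg, div_neg]
      ring
  -- formula for positive z
  have hpos : ∀ z : ℝ, 0 < z → g z =
      (1 - T z) + z / Real.sinh z * ((Real.cosh z - Real.sinh z) / Real.cosh z ^ 2) := by
    intro z hz
    have hs : Real.sinh z ≠ 0 := Real.sinh_ne_zero.mpr hz.ne'
    rw [hg z hz.ne', Real.sign_of_pos hz, Real.sinh_two_mul]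
    unfold T
    field_simp
    ring
  -- continuous representation
  set φ : ℝ → ℝ := fun z => if z = 0 then 1 else z / Real.sinh z with hφdef
  have hrep : ∀ z : ℝ, g z =
      (1 - Real.sinh |z| / Real.cosh z) +
        φ z * ((Real.cosh z - Real.sinh |z|) / Real.cosh z ^ 2) := by
    intro z
    rcases lt_trichotomy z 0 with hz | rfl | hz
    · have hzne : z ≠ 0 := hz.ne
      have hw : (0:ℝ) < -z := by linarith
      have hs : Real.sinh z ≠ 0 := Real.sinh_ne_zero.mpr hzne
      have := hpos (-z) hw
      rw [heven z] at this
      rw [this, abs_of_neg hz]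
      unfold T
      simp only [hφdef, if_neg hzne, Real.sinh_neg, Real.cosh_neg]
      field_simp
      all_goals ring
    · simp [hg0, hφdef, Real.sinh_zero, Real.cosh_zero]
      norm_num
    · rw [hpos z hz, abs_of_pos hz]
      unfold T
      simp only [hφdef, if_neg hz.ne']
  -- continuity
  have hGcont : Continuous (fun z : ℝ =>
      (1 - Real.sinh |z| / Real.cosh z) +
        φ z * ((Real.cosh z - Real.sinh |z|) / Real.cosh z ^ 2)) := by
    have hc1 : Continuous fun z : ℝ => Real.sinh |z| :=
      Real.continuous_sinh.comp continuous_abs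
    have hc2 : Continuous fun z : ℝ => Real.cosh z ^ 2 := Real.continuous_cosh.pow 2
    exact (continuous_const.sub (hc1.div Real.continuous_cosh hcosh)).add
      ((ostrovsky_phi_continuous).mul
        ((Real.continuous_cosh.sub hc1).div hc2 (fun z => by positivity)))
  have hcont : Continuous g := by
    have : g = fun z : ℝ =>
        (1 - Real.sinh |z| / Real.cosh z) +
          φ z * ((Real.cosh z - Real.sinh |z|) / Real.cosh z ^ 2) := funext hrep
    rw [this]; exact hGcont
  -- bounds on (0, ∞)
  have hbound : ∀ z : ℝ, 0 < z → g z ≤ 2 * Real.exp (-z) ∧ 0 ≤ g z := by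
    intro z hz
    have hs : 0 < Real.sinh z := Real.sinh_pos_iff.mpr hz
    have hc : 0 < Real.cosh z := Real.cosh_pos z
    have hc1 : 1 ≤ Real.cosh z := Real.one_le_cosh z
    have hcs : Real.cosh z - Real.sinh z = Real.exp (-z) := Real.cosh_sub_sinh z
    have hslt : Real.sinh z < Real.cosh z := Real.sinh_lt_cosh z
    have hzs : z ≤ Real.sinh z := (Real.self_lt_sinh_iff.mpr hz).le
    rw [hpos z hz]
    constructor
    · have h1 : 1 - T z ≤ Real.exp (-z) := by
        have hd : 1 - T z = (Real.cosh z - Real.sinh z) / Real.cosh z := by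
          unfold T
          field_simp
        rw [hd, ← hcs, div_le_iff₀ hc]
        nlinarith [Real.exp_pos (-z)]
      have h2 : z / Real.sinh z * ((Real.cosh z - Real.sinh z) / Real.cosh z ^ 2) ≤
          Real.exp (-z) := by
        have ha : z / Real.sinh z ≤ 1 := (div_le_one hs).mpr hzs
        have hb : (Real.cosh z - Real.sinh z) / Real.cosh z ^ 2 ≤ Real.exp (-z) := by
          rw [hcs, div_le_iff₀ (by positivity : (0:ℝ) < Real.cosh z ^ 2)]
          have hcsq : 1 ≤ Real.cosh z ^ 2 := by nlinarith
          nlinarith [mul_le_mul_of_nonneg_left hcsq (Real.exp_pos (-z)).le]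
        have hb0 : 0 ≤ (Real.cosh z - Real.sinh z) / Real.cosh z ^ 2 :=
          div_nonneg (by linarith) (by positivity)
        have ha0 : 0 ≤ z / Real.sinh z := by positivity
        calc z / Real.sinh z * ((Real.cosh z - Real.sinh z) / Real.cosh z ^ 2)
            ≤ 1 * Real.exp (-z) := mul_le_mul ha hb hb0 (by norm_num)
          _ = Real.exp (-z) := one_mul _
      linarith
    · have h1 : 0 ≤ 1 - T z := by
        have := T_lt_one z; linarith
      have h2 : 0 ≤ z / Real.sinh z * ((Real.cosh z - Real.sinh z) / Real.cosh z ^ 2) := by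
        have : 0 ≤ Real.cosh z - Real.sinh z := by linarith
        positivity
      linarith
  -- integrability on Ioi 0
  have hIoi : IntegrableOn g (Ioi (0:ℝ)) := by
    have hmaj : IntegrableOn (fun z : ℝ => 2 * Real.exp (-z)) (Ioi (0:ℝ)) := by
      have h := (exp_neg_integrableOn_Ioi (0:ℝ) (one_pos)).const_mul 2
      simpa [neg_one_mul, IntegrableOn] using h
    apply Integrable.mono hmaj (hcont.aestronglyMeasurable.restrict)
    rw [ae_restrict_iff' measurableSet_Ioi]
    refine ae_of_all _ fun z hz => ?_
    obtain ⟨hb, hnn⟩ := hbound z hz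
    rw [Real.norm_of_nonneg hnn, Real.norm_of_nonneg (by positivity)]
    exact hb
  -- integrability on Iic 0
  have hIic : IntegrableOn g (Iic (0:ℝ)) := by
    rw [← Measure.map_neg_eq_self (volume : Measure ℝ)]
    have m : MeasurableEmbedding fun x : ℝ => -x :=
      (Homeomorph.neg ℝ).measurableEmbedding
    rw [m.integrableOn_map_iff]
    have hco : (g ∘ fun x : ℝ => -x) = g := funext fun x => heven x
    rw [hco]
    have hpre : (fun x : ℝ => -x) ⁻¹' (Iic 0) = Ici 0 := by
      ext x; simp
    rw [hpre]
    exact (integrableOn_Ici_iff_integrableOn_Ioi' (by simp)).mpr hIoi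
  have hint : Integrable g volume := by
    rw [← integrableOn_univ, ← Set.Iic_union_Ioi (a := (0:ℝ))]
    exact hIic.union hIoi
  -- the integral over Ioi 0
  have hval : ∫ z in Ioi (0:ℝ), g z = Real.pi ^ 2 / 8 := by
    have hre : ∫ z in Ioi (0:ℝ), g z = ∫ z in Ioi (0:ℝ), (∑' k : ℕ, v k z) := by
      refine setIntegral_congr_fun measurableSet_Ioi fun z hz => ?_
      have h1 := (hasSum_v (show (0:ℝ) < z from hz)).tsum_eq
      rw [h1, hpos z hz]
    -- rewrite each v k as a difference
    have hvrw : ∀ k : ℕ, (fun z => v k z) = fun z =>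
        (2 * (k:ℝ) + 2) / (2 * k + 1) * (T z ^ (2*k) * (1 / Real.cosh z ^ 2)) -
        (2 * (k:ℝ) + 2) / (2 * k + 1) * (T z ^ (2*k+1) * (1 / Real.cosh z ^ 2)) := by
      intro k
      funext z
      unfold v
      rw [pow_succ]
      ring
    have hVint : ∀ k : ℕ, IntegrableOn (v k) (Ioi (0:ℝ)) := by
      intro k
      rw [show (v k) = fun z => v k z from rfl, hvrw k]
      exact ((integrableOn_T_pow (2*k)).const_mul _).sub
        ((integrableOn_T_pow (2*k+1)).const_mul _)
    have hVval : ∀ k : ℕ, ∫ z in Ioi (0:ℝ), v k z = 1 / (2 * (k:ℝ) + 1) ^ 2 := by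
      intro k
      rw [show (fun z => v k z) = _ from hvrw k]
      rw [integral_sub ((integrableOn_T_pow (2*k)).const_mul _)
        ((integrableOn_T_pow (2*k+1)).const_mul _), integral_const_mul, integral_const_mul,
        integral_T_pow, integral_T_pow]
      have hk1 : (2 * (k:ℝ) + 1) ≠ 0 := by positivity
      have hk2 : (2 * (k:ℝ) + 2) ≠ 0 := by positivity
      push_cast
      field_simp
      ring
    have hVnonneg : ∀ k : ℕ, ∀ z ∈ Ioi (0:ℝ), 0 ≤ v k z := by
      intro k z hz
      have h1 := T_nonneg (le_of_lt (show (0:ℝ) < z from hz))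
      have h2 := T_lt_one z
      unfold v
      have : 0 ≤ 1 - T z := by linarith
      positivity
    have hnorm : ∀ k : ℕ, ∫ z in Ioi (0:ℝ), ‖v k z‖ = 1 / (2 * (k:ℝ) + 1) ^ 2 := by
      intro k
      rw [← hVval k]
      refine setIntegral_congr_fun measurableSet_Ioi fun z hz => ?_
      exact Real.norm_of_nonneg (hVnonneg k z hz)
    have hsummable : Summable fun k : ℕ => ∫ z in Ioi (0:ℝ), ‖v k z‖ := by
      have := hasSum_odd_sq.summable
      apply this.congr
      intro k
      rw [hnorm k]
    have hswap := integral_tsum_of_summable_integral_norm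
      (F := fun k : ℕ => v k) (μ := volume.restrict (Ioi (0:ℝ)))
      (fun k => hVint k) hsummable
    rw [hre, ← hswap]
    have : ∀ k : ℕ, ∫ z in Ioi (0:ℝ), v k z = 1 / (2 * (k:ℝ) + 1) ^ 2 := hVval
    calc ∑' k : ℕ, ∫ z in Ioi (0:ℝ), v k z
        = ∑' k : ℕ, 1 / (2 * (k:ℝ) + 1) ^ 2 := tsum_congr this
      _ = Real.pi ^ 2 / 8 := hasSum_odd_sq.tsum_eq
  -- assemble
  refine ⟨hcont, hint, ?_⟩
  have habs : (fun x : ℝ => g |x|) = g := by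
    funext x
    rcases le_or_gt 0 x with hx | hx
    · rw [abs_of_nonneg hx]
    · rw [abs_of_neg hx, heven x]
  have h2 : ∫ z : ℝ, g z = 2 * ∫ z in Ioi (0:ℝ), g z := by
    have h := integral_comp_abs (f := g)
    rw [show (fun x : ℝ => g |x|) = g from habs] at h
    exact h
  rw [h2, hval]
  ring
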